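/- Let P, Q be probability distributions on a finite set X, f: X → [0,1] with f ≥ min{1, P/Q} pointwise, and set r = Σ_x (1−f(x))Q(x). If r > 0, then for the optimal resampling distribution G*(x) = [P(x) − Q(x)f(x)]_+ / Σ_{x̃}[P(x̃) − Q(x̃)f(x̃)]_+, the one-step output P̂(x) = Q(x)f(x) + G*(x)·r satisfies TV(P̂, P) = (1/2)(Σ_x |P(x) − Q(x)f(x)| − r). -/

import Mathlib

open Finset

/-- Total variation distance between two functions on a finite set. -/
noncomputable def tvDist {X : Type*} [Fintype X] (μ ν : X → ℝ) : ℝ :=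
  (1/2) * ∑ x, |μ x - ν x|

/-- with f ≥ min{1, P/Q} pointwise (i.e. Q(x)f(x) ≥ min{Q(x),P(x)}),
r = ∑ₓ (1−f(x))Q(x) > 0, and the optimal resampling distribution
G*(x) = [P(x) − Q(x)f(x)]₊ / ∑ₓ̃ [P(x̃) − Q(x̃)f(x̃)]₊, the one-step output
P̂(x) = Q(x)f(x) + G*(x)·r satisfies TV(P̂, P) = (1/2)(∑ₓ |P(x) − Q(x)f(x)| − r). -/
theorem stmt9 {X : Type*} [Fintype X]
    (P Q f : X → ℝ)
    (hP0 : ∀ x, 0 ≤ P x) (hP1 : ∑ x, P x = 1)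
    (hQ0 : ∀ x, 0 ≤ Q x) (hQ1 : ∑ x, Q x = 1)
    (hf0 : ∀ x, 0 ≤ f x) (hf1 : ∀ x, f x ≤ 1)
    (hflow : ∀ x, min (Q x) (P x) ≤ Q x * f x)
    (hr : 0 < ∑ x, (1 - f x) * Q x) :
    tvDist
        (fun x => Q x * f x +
          (max (P x - Q x * f x) 0 / ∑ y, max (P y - Q y * f y) 0) *
            ∑ y, (1 - f y) * Q y) P
      = (1/2) * (∑ x, |P x - Q x * f x| - ∑ x, (1 - f x) * Q x) := by
  set S := ∑ y, max (P y - Q y * f y) 0 with hSdef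
  set r := ∑ y, (1 - f y) * Q y with hrdef
  have hrsum : r = ∑ x, (P x - Q x * f x) := by
    calc r = ∑ x, (Q x - Q x * f x) := by
            apply Finset.sum_congr rfl; intros; ring
    _ = 1 - ∑ x, Q x * f x := by rw [Finset.sum_sub_distrib, hQ1]
    _ = ∑ x, P x - ∑ x, Q x * f x := by rw [hP1]
    _ = ∑ x, (P x - Q x * f x) := (Finset.sum_sub_distrib _ _).symm
  have hrS : r ≤ S := by
    rw [hrsum]; exact Finset.sum_le_sum fun x _ => le_max_left _ _
  have hS : 0 < S := lt_of_lt_of_le hr hrS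
  have key : ∀ x, |(Q x * f x + max (P x - Q x * f x) 0 / S * r) - P x|
      = |P x - Q x * f x| - max (P x - Q x * f x) 0 * (r / S) := by
    intro x
    rcases le_or_gt (P x - Q x * f x) 0 with h | h
    · rw [max_eq_right h]
      rw [abs_sub_comm]
      have : P x - (Q x * f x + 0 / S * r) = P x - Q x * f x := by ring
      rw [this]
      ring
    · rw [max_eq_left h.le]
      have h1 : Q x * f x + (P x - Q x * f x) / S * r - P x
          = -((P x - Q x * f x) * (1 - r / S)) := by
        field_simp
        ring
      rw [h1, abs_neg, abs_of_nonneg (by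
        apply mul_nonneg h.le
        have : r / S ≤ 1 := (div_le_one hS).mpr hrS
        linarith)]
      rw [abs_of_pos h]
      ring
  rw [tvDist]
  have hsum : ∑ x, |(Q x * f x + max (P x - Q x * f x) 0 / S * r) - P x|
      = ∑ x, (|P x - Q x * f x| - max (P x - Q x * f x) 0 * (r / S)) :=
    Finset.sum_congr rfl fun x _ => key x
  rw [hsum, Finset.sum_sub_distrib, ← Finset.sum_mul]
  rw [show (∑ x, max (P x - Q x * f x) 0) = S from rfl]
  rw [mul_div_cancel₀ _ (ne_of_gt hS)]
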